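/- Consider the closed-loop stochastic recursion x(k+1) = (A + B K C(k)) x(k) with deterministic initial condition x(0) = x₀ ∈ ℝⁿ, where C(k) = Diag(c₁(k)/p₁, …, cₙ(k)/pₙ) and the family (cᵢ(k))_{k∈ℕ, 1≤i≤n} consists of mutually independent Bernoulli random variables with parameters pᵢ ∈ (0,1]. Let D := A + B K, L := B K, sᵢ := Σ_{k=1}^{n} L_{k,i}², and g(p₁,…,pₙ) := ‖Dᵀ D + Diag(−s₁ + s₁/p₁, …, −sₙ + sₙ/pₙ)‖₂. If g(p₁,…,pₙ) < 1, then E[‖x(k)‖²] ≤ g(p₁,…,pₙ)^k · ‖x₀‖² for all k ∈ ℕ, and in particular the closed-loop system is asymptotically mean-square stable: E[‖x(k)‖²] → 0 as k → ∞ for every initial condition x₀. -/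

import Mathlib

open MeasureTheory ProbabilityTheory Matrix Filter

set_option maxHeartbeats 2000000
set_option synthInstance.maxHeartbeats 1000000

/-- The spectral norm (ℓ²-operator norm) of a real square matrix. -/
noncomputable def specNorm {n : ℕ} (M : Matrix (Fin n) (Fin n) ℝ) : ℝ :=
  ‖LinearMap.toContinuousLinearMap (Matrix.toEuclideanLin M)‖

lemma integrable_of_bdd {Ω : Type*} [MeasurableSpace Ω] {μ : Measure Ω} [IsFiniteMeasure μ]
    {f : Ω → ℝ} {C : ℝ} (hf : Measurable f) (h : ∀ ω, |f ω| ≤ C) : Integrable f μ :=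
  (integrable_const C).mono' hf.aestronglyMeasurable
    (ae_of_all _ fun ω => by simpa [Real.norm_eq_abs] using h ω)

lemma bernoulli_integral {Ω : Type*} [MeasurableSpace Ω] (μ : Measure Ω)
    (f : Ω → ℝ) (hf : Measurable f) (h01 : ∀ ω, f ω = 0 ∨ f ω = 1) {q : ℝ} (hq0 : 0 ≤ q)
    (hμ : μ {ω | f ω = 1} = ENNReal.ofReal q) : ∫ ω, f ω ∂μ = q := by
  have hset : MeasurableSet {ω | f ω = 1} := hf (measurableSet_singleton 1)
  have hfe : f = Set.indicator {ω | f ω = 1} (fun _ => (1:ℝ)) := by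
    funext ω
    rcases h01 ω with h | h <;> simp [Set.indicator, h]
  rw [hfe, integral_indicator_const _ hset, measureReal_def, hμ, ENNReal.toReal_ofReal hq0]
  simp


lemma specNorm_nonneg {n : ℕ} (M : Matrix (Fin n) (Fin n) ℝ) : 0 ≤ specNorm M :=
  norm_nonneg _

lemma quad_bound {n : ℕ} (M : Matrix (Fin n) (Fin n) ℝ) (v : Fin n → ℝ) :
    ∑ j, ∑ l, M j l * (v j * v l) ≤ specNorm M * ∑ i, v i ^ 2 := by
  classical
  set w : EuclideanSpace ℝ (Fin n) := (WithLp.equiv 2 (Fin n → ℝ)).symm v with hw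
  have hvw : ∀ i, w i = v i := fun i => rfl
  have h1 : ∑ j, ∑ l, M j l * (v j * v l)
      = inner (𝕜 := ℝ) w ((Matrix.toEuclideanLin M) w) := by
    rw [PiLp.inner_apply]
    refine Finset.sum_congr rfl fun j _ => ?_
    have hMj : ((Matrix.toEuclideanLin M) w) j = ∑ l, M j l * v l := by
      rw [Matrix.toEuclideanLin_apply]; rfl
    rw [RCLike.inner_apply, hMj, conj_trivial, hvw, Finset.sum_mul]
    refine Finset.sum_congr rfl fun l _ => by ring
  rw [h1]
  have h2 := real_inner_le_norm w ((Matrix.toEuclideanLin M) w)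
  have h3 : ‖(Matrix.toEuclideanLin M) w‖ ≤ specNorm M * ‖w‖ := by
    have := ContinuousLinearMap.le_opNorm
      (LinearMap.toContinuousLinearMap (Matrix.toEuclideanLin M)) w
    simpa [specNorm] using this
  have h4 : ‖w‖ ^ 2 = ∑ i, v i ^ 2 := by
    rw [← real_inner_self_eq_norm_sq, PiLp.inner_apply]
    simp [RCLike.inner_apply, hvw, sq]
  calc inner (𝕜 := ℝ) w ((Matrix.toEuclideanLin M) w) ≤ ‖w‖ * ‖(Matrix.toEuclideanLin M) w‖ := h2
    _ ≤ ‖w‖ * (specNorm M * ‖w‖) := mul_le_mul_of_nonneg_left h3 (norm_nonneg w)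
    _ = specNorm M * ‖w‖ ^ 2 := by ring
    _ = specNorm M * ∑ i, v i ^ 2 := by rw [h4]


/-- For the closed-loop stochastic recursion
`x(k+1) = (A + B K C(k)) x(k)` with `C(k) = Diag(c₁(k)/p₁, …, cₙ(k)/pₙ)` built from
mutually independent Bernoulli random variables with parameters `pᵢ ∈ (0,1]`, with
`D := A + B K`, `L := B K`, `sᵢ := Σₖ L_{k,i}²` and
`g(p₁,…,pₙ) := ‖Dᵀ D + Diag(−s₁ + s₁/p₁, …, −sₙ + sₙ/pₙ)‖₂`: if `g(p₁,…,pₙ) < 1` then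
`E[‖x(k)‖²] ≤ g(p₁,…,pₙ)^k · ‖x₀‖²` for all `k`, and `E[‖x(k)‖²] → 0` (AMSS). -/
theorem amss_of_g_lt_one
    {n m : ℕ} (A : Matrix (Fin n) (Fin n) ℝ) (B : Matrix (Fin n) (Fin m) ℝ)
    (K : Matrix (Fin m) (Fin n) ℝ)
    {Ω : Type*} [MeasurableSpace Ω] (μ : Measure Ω) [IsProbabilityMeasure μ]
    (p : Fin n → ℝ) (hp : ∀ i, p i ∈ Set.Ioc (0 : ℝ) 1)
    (c : ℕ → Fin n → Ω → ℝ)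
    (hmeas : ∀ k i, Measurable (c k i))
    (h01 : ∀ k i ω, c k i ω = 0 ∨ c k i ω = 1)
    (hber : ∀ k i, μ {ω | c k i ω = 1} = ENNReal.ofReal (p i))
    (hindep : iIndepFun
      (fun (ki : ℕ × Fin n) ω => c ki.1 ki.2 ω) μ)
    (hg : specNorm ((A + B * K)ᵀ * (A + B * K) + Matrix.diagonal
        (fun i => -(∑ j, ((B * K) j i) ^ 2) + (∑ j, ((B * K) j i) ^ 2) / p i)) < 1)
    (x₀ : Fin n → ℝ) (x : ℕ → Ω → Fin n → ℝ)
    (hx0 : ∀ ω, x 0 ω = x₀)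
    (hxrec : ∀ k ω, x (k + 1) ω =
      (A + B * K * Matrix.diagonal (fun i => c k i ω / p i)).mulVec (x k ω)) :
    (∀ k, (∫ ω, ∑ i, (x k ω i) ^ 2 ∂μ) ≤
        specNorm ((A + B * K)ᵀ * (A + B * K) + Matrix.diagonal
          (fun i => -(∑ j, ((B * K) j i) ^ 2) + (∑ j, ((B * K) j i) ^ 2) / p i)) ^ k *
          ∑ i, (x₀ i) ^ 2) ∧
      Tendsto (fun k => ∫ ω, ∑ i, (x k ω i) ^ 2 ∂μ) atTop (nhds 0) := by
  classical
  set L := B * K with hLdef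
  set D := A + L with hDdef
  set M := Dᵀ * D + Matrix.diagonal
      (fun i => -(∑ j, (L j i) ^ 2) + (∑ j, (L j i) ^ 2) / p i) with hMdef
  set g := specNorm M with hgdef
  have hp0 : ∀ i, 0 < p i := fun i => (hp i).1
  -- entrywise recursion
  have hxentry : ∀ k ω i, x (k + 1) ω i
      = ∑ j, (A i j + L i j * c k j ω / p j) * x k ω j := by
    intro k ω i
    rw [hxrec]
    simp [Matrix.mulVec, dotProduct, Matrix.add_apply, Matrix.mul_diagonal,
      mul_div_assoc]
  -- factorization of x k through past coin flips
  have hfact : ∀ k, ∃ f : ((Finset.range k ×ˢ (Finset.univ : Finset (Fin n)) :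
        Finset (ℕ × Fin n)) → ℝ) → Fin n → ℝ,
      Measurable f ∧ ∀ ω, x k ω = f (fun s => c (s : ℕ × Fin n).1 (s : ℕ × Fin n).2 ω) := by
    intro k
    induction k with
    | zero => exact ⟨fun _ => x₀, measurable_const, fun ω => hx0 ω⟩
    | succ k ih =>
        obtain ⟨f, hfm, hfx⟩ := ih
        have memk : ∀ j : Fin n, ((k, j) : ℕ × Fin n) ∈
            Finset.range (k+1) ×ˢ (Finset.univ : Finset (Fin n)) := by
          intro j; simp
        have emb : ∀ s : ((Finset.range k ×ˢ (Finset.univ : Finset (Fin n)) :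
            Finset (ℕ × Fin n)) : Type), (s : ℕ × Fin n) ∈
            Finset.range (k+1) ×ˢ (Finset.univ : Finset (Fin n)) := by
          rintro ⟨s, hs⟩
          simp only [Finset.mem_product, Finset.mem_range, Finset.mem_univ, and_true] at hs ⊢
          omega
        refine ⟨fun t i => ∑ j, (A i j + L i j * t ⟨(k, j), memk j⟩ / p j)
            * f (fun s => t ⟨(s : ℕ × Fin n), emb s⟩) j, ?_, ?_⟩
        · refine measurable_pi_lambda _ fun i => Finset.measurable_sum _ fun j _ => ?_
          have h1 : Measurable fun t : ((Finset.range (k+1) ×ˢ (Finset.univ : Finset (Fin n)) :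
              Finset (ℕ × Fin n)) → ℝ) => t ⟨(k, j), memk j⟩ := measurable_pi_apply _
          have h2 : Measurable fun t : ((Finset.range (k+1) ×ˢ (Finset.univ : Finset (Fin n)) :
              Finset (ℕ × Fin n)) → ℝ) => f (fun s => t ⟨(s : ℕ × Fin n), emb s⟩) j :=
            (measurable_pi_apply j).comp (hfm.comp
              (measurable_pi_lambda _ fun s => measurable_pi_apply _))
          exact ((measurable_const.add ((h1.const_mul _).div_const _)).mul h2)
        · intro ω
          funext i
          rw [hxentry k ω i, hfx ω]

  -- measurability of x k
  have hxm : ∀ k, Measurable (x k) := by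
    intro k
    obtain ⟨f, hfm, hfx⟩ := hfact k
    have : x k = f ∘ (fun ω => fun s : (Finset.range k ×ˢ (Finset.univ : Finset (Fin n)) :
        Finset (ℕ × Fin n)) => c (s : ℕ × Fin n).1 (s : ℕ × Fin n).2 ω) := by
      funext ω; exact hfx ω
    rw [this]
    exact hfm.comp (measurable_pi_lambda _ fun s => hmeas _ _)
  have hxmi : ∀ k i, Measurable fun ω => x k ω i := fun k i =>
    (measurable_pi_apply i).comp (hxm k)
  -- boundedness of x k
  have hbd : ∀ k, ∃ C : ℝ, 0 ≤ C ∧ ∀ ω i, |x k ω i| ≤ C := by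
    have hcb : ∀ k j ω, |c k j ω| ≤ 1 := by
      intro k j ω; rcases h01 k j ω with h | h <;> simp [h]
    have hab : ∀ k ω i j, |A i j + L i j * c k j ω / p j| ≤ |A i j| + |L i j| / p j := by
      intro k ω i j
      refine (abs_add_le _ _).trans ?_
      gcongr
      rw [abs_div, abs_mul, abs_of_pos (hp0 j)]
      have := hcb k j ω
      calc |L i j| * |c k j ω| / p j ≤ |L i j| * 1 / p j := by gcongr <;> exact (hp0 j).le
        _ = |L i j| / p j := by ring
    intro k
    induction k with
    | zero =>
        refine ⟨∑ i, |x₀ i|, Finset.sum_nonneg fun i _ => abs_nonneg _, fun ω i => ?_⟩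
        rw [hx0]
        exact Finset.single_le_sum (fun i _ => abs_nonneg (x₀ i)) (Finset.mem_univ i)
    | succ k ih =>
        obtain ⟨C, hC0, hC⟩ := ih
        refine ⟨(∑ i, ∑ j, (|A i j| + |L i j| / p j)) * C, ?_, fun ω i => ?_⟩
        · refine mul_nonneg (Finset.sum_nonneg fun i _ => Finset.sum_nonneg fun j _ =>
            add_nonneg (abs_nonneg _) (div_nonneg (abs_nonneg _) (hp0 j).le)) hC0
        · rw [hxentry]
          calc |∑ j, (A i j + L i j * c k j ω / p j) * x k ω j|
              ≤ ∑ j, |(A i j + L i j * c k j ω / p j) * x k ω j| :=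
                Finset.abs_sum_le_sum_abs _ _
            _ ≤ ∑ j, (|A i j| + |L i j| / p j) * C := by
                refine Finset.sum_le_sum fun j _ => ?_
                rw [abs_mul]
                exact mul_le_mul (hab k ω i j) (hC ω j) (abs_nonneg _)
                  (add_nonneg (abs_nonneg _) (div_nonneg (abs_nonneg _) (hp0 j).le))
            _ = (∑ j, (|A i j| + |L i j| / p j)) * C := by rw [Finset.sum_mul]
            _ ≤ (∑ i, ∑ j, (|A i j| + |L i j| / p j)) * C := by
                refine mul_le_mul_of_nonneg_right ?_ hC0
                exact Finset.single_le_sum (f := fun i => ∑ j, (|A i j| + |L i j| / p j))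
                  (fun i _ => Finset.sum_nonneg fun j _ =>
                    add_nonneg (abs_nonneg _) (div_nonneg (abs_nonneg _) (hp0 j).le)) (Finset.mem_univ i)

  -- key step inequality
  have hkey : ∀ k, (∫ ω, ∑ i, (x (k+1) ω i) ^ 2 ∂μ) ≤ g * ∫ ω, ∑ i, (x k ω i) ^ 2 ∂μ := by
    intro k
    rw [hgdef]
    obtain ⟨C, hC0, hC⟩ := hbd k
    obtain ⟨f, hfm, hfx⟩ := hfact k
    -- coin basics
    have hcb : ∀ j ω, |c k j ω| ≤ 1 := by
      intro j ω; rcases h01 k j ω with h | h <;> simp [h]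
    have hcint : ∀ j, Integrable (c k j) μ := fun j => integrable_of_bdd (hmeas k j) (hcb j)
    have hEc : ∀ j, ∫ ω, c k j ω ∂μ = p j := fun j =>
      bernoulli_integral μ _ (hmeas k j) (h01 k j) (hp0 j).le (hber k j)
    have hccint : ∀ j l, Integrable (fun ω => c k j ω * c k l ω) μ := fun j l =>
      integrable_of_bdd ((hmeas k j).mul (hmeas k l)) (C := 1) fun ω => by
        rw [abs_mul]
        exact mul_le_one₀ (hcb j ω) (abs_nonneg _) (hcb l ω)
    have hEcc : ∀ j l, j ≠ l → ∫ ω, c k j ω * c k l ω ∂μ = p j * p l := by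
      intro j l hjl
      have hI : IndepFun (c k j) (c k l) μ :=
        hindep.indepFun (i := (k, j)) (j := (k, l)) (by simp [Prod.ext_iff, hjl])
      have := IndepFun.integral_mul_eq_mul_integral hI (hcint j).aestronglyMeasurable (hcint l).aestronglyMeasurable
      rw [hEc j, hEc l] at this
      simpa [Pi.mul_apply] using this
    -- the coefficient random variables
    set a : Fin n → Fin n → Ω → ℝ := fun i j ω => A i j + L i j * c k j ω / p j with ha
    have hameas : ∀ i j, Measurable (a i j) := fun i j =>
      (measurable_const.add (((hmeas k j).const_mul _).div_const _))
    have hab : ∀ i j ω, |a i j ω| ≤ |A i j| + |L i j| / p j := by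
      intro i j ω
      refine (abs_add_le _ _).trans ?_
      gcongr
      rw [abs_div, abs_mul, abs_of_pos (hp0 j)]
      calc |L i j| * |c k j ω| / p j ≤ |L i j| * 1 / p j := by
            gcongr
            · exact (hp0 j).le
            · exact hcb j ω
        _ = |L i j| / p j := by ring
    have haaint : ∀ i j l, Integrable (fun ω => a i j ω * a i l ω) μ := by
      intro i j l
      refine integrable_of_bdd ((hameas i j).mul (hameas i l))
        (C := (|A i j| + |L i j| / p j) * (|A i l| + |L i l| / p l)) fun ω => ?_
      rw [abs_mul]
      exact mul_le_mul (hab i j ω) (hab i l ω) (abs_nonneg _)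
        ((abs_nonneg _).trans (hab i j ω))
    have hyyint : ∀ j l, Integrable (fun ω => x k ω j * x k ω l) μ := fun j l =>
      integrable_of_bdd ((hxmi k j).mul (hxmi k l)) (C := C * C) fun ω => by
        rw [abs_mul]
        exact mul_le_mul (hC ω j) (hC ω l) (abs_nonneg _) hC0
    have haayyint : ∀ i j l, Integrable (fun ω => (a i j ω * a i l ω) * (x k ω j * x k ω l)) μ := by
      intro i j l
      refine integrable_of_bdd (((hameas i j).mul (hameas i l)).mul ((hxmi k j).mul (hxmi k l)))
        (C := ((|A i j| + |L i j| / p j) * (|A i l| + |L i l| / p l)) * (C * C)) fun ω => ?_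
      rw [abs_mul, abs_mul, abs_mul]
      refine mul_le_mul (mul_le_mul (hab i j ω) (hab i l ω) (abs_nonneg _)
        ((abs_nonneg _).trans (hab i j ω)))
        (mul_le_mul (hC ω j) (hC ω l) (abs_nonneg _) hC0) (by positivity) ?_
      exact mul_nonneg ((abs_nonneg _).trans (hab i j ω)) ((abs_nonneg _).trans (hab i l ω))
    -- expectation of products of coefficients
    have hEaa : ∀ i j l, ∫ ω, a i j ω * a i l ω ∂μ
        = D i j * D i l + (if j = l then L i j * L i l * (1 / p j - 1) else 0) := by
      intro i j l
      have hexp : ∀ ω, a i j ω * a i l ω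
          = A i j * A i l + (A i j * L i l / p l) * c k l ω + (A i l * L i j / p j) * c k j ω
            + (L i j * L i l / (p j * p l)) * (c k j ω * c k l ω) := by
        intro ω
        rw [ha]
        field_simp
        ring
      rw [integral_congr_ae (ae_of_all μ hexp)]
      have i4 : Integrable (fun ω => L i j * L i l / (p j * p l) * (c k j ω * c k l ω)) μ :=
        (hccint j l).const_mul _
      have i3 : Integrable (fun ω => A i l * L i j / p j * c k j ω) μ := (hcint j).const_mul _
      have i2 : Integrable (fun ω => A i j * L i l / p l * c k l ω) μ := (hcint l).const_mul _
      have i1 : Integrable (fun _ : Ω => A i j * A i l) μ := integrable_const _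
      have i12 : Integrable (fun ω => A i j * A i l + A i j * L i l / p l * c k l ω) μ := i1.add i2
      have i123 : Integrable (fun ω => A i j * A i l + A i j * L i l / p l * c k l ω
          + A i l * L i j / p j * c k j ω) μ := i12.add i3
      rw [integral_add i123 i4, integral_add i12 i3, integral_add i1 i2,
        integral_const, integral_const_mul, integral_const_mul, integral_const_mul, hEc j, hEc l]
      simp only [measure_univ, ENNReal.toReal_one, smul_eq_mul, one_mul, probReal_univ]
      rw [hDdef]
      simp only [Matrix.add_apply]
      by_cases hjl : j = l
      · subst hjl
        have hcc : (fun ω => c k j ω * c k j ω) = c k j :=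
          funext fun ω => by rcases h01 k j ω with h | h <;> simp [h]
        rw [hcc, hEc j, if_pos rfl]
        have hpj := (hp0 j).ne'
        field_simp
        ring
      · rw [hEcc j l hjl, if_neg hjl]
        have hpj := (hp0 j).ne'
        have hpl := (hp0 l).ne'
        field_simp
        ring
    -- independence splitting
    have hsplit : ∀ i j l, ∫ ω, (a i j ω * a i l ω) * (x k ω j * x k ω l) ∂μ
        = (∫ ω, a i j ω * a i l ω ∂μ) * ∫ ω, x k ω j * x k ω l ∂μ := by
      intro i j l
      have hST : Disjoint (({k} : Finset ℕ) ×ˢ (Finset.univ : Finset (Fin n)))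
          (Finset.range k ×ˢ (Finset.univ : Finset (Fin n))) := by
        rw [Finset.disjoint_left]
        rintro ⟨k', j'⟩ hsS hsT
        simp only [Finset.mem_product, Finset.mem_singleton, Finset.mem_range,
          Finset.mem_univ, and_true] at hsS hsT
        omega
      have hIF := hindep.indepFun_finset (({k} : Finset ℕ) ×ˢ (Finset.univ : Finset (Fin n)))
        (Finset.range k ×ˢ (Finset.univ : Finset (Fin n))) hST (fun ki => hmeas ki.1 ki.2)
      have memS : ∀ j' : Fin n, ((k, j') : ℕ × Fin n)
          ∈ ({k} : Finset ℕ) ×ˢ (Finset.univ : Finset (Fin n)) := by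
        intro j'; simp
      have hφm : Measurable (fun t : ((({k} : Finset ℕ) ×ˢ (Finset.univ : Finset (Fin n)) :
            Finset (ℕ × Fin n)) → ℝ) =>
          (A i j + L i j * t ⟨(k, j), memS j⟩ / p j)
            * (A i l + L i l * t ⟨(k, l), memS l⟩ / p l)) :=
        (measurable_const.add (((measurable_pi_apply _).const_mul _).div_const _)).mul
          (measurable_const.add (((measurable_pi_apply _).const_mul _).div_const _))
      have hψm : Measurable (fun t : ((Finset.range k ×ˢ (Finset.univ : Finset (Fin n)) :
            Finset (ℕ × Fin n)) → ℝ) => f t j * f t l) := by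
        fun_prop
      have hcomp := hIF.comp hφm hψm
      have heq1 : ((fun t : ((({k} : Finset ℕ) ×ˢ (Finset.univ : Finset (Fin n)) :
            Finset (ℕ × Fin n)) → ℝ) =>
          (A i j + L i j * t ⟨(k, j), memS j⟩ / p j)
            * (A i l + L i l * t ⟨(k, l), memS l⟩ / p l))
          ∘ (fun ω (s : (({k} : Finset ℕ) ×ˢ (Finset.univ : Finset (Fin n)) :
            Finset (ℕ × Fin n))) => c (s : ℕ × Fin n).1 (s : ℕ × Fin n).2 ω))
          = fun ω => a i j ω * a i l ω := rfl
      have heq2 : ((fun t : ((Finset.range k ×ˢ (Finset.univ : Finset (Fin n)) :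
            Finset (ℕ × Fin n)) → ℝ) => f t j * f t l)
          ∘ (fun ω (s : (Finset.range k ×ˢ (Finset.univ : Finset (Fin n)) :
            Finset (ℕ × Fin n))) => c (s : ℕ × Fin n).1 (s : ℕ × Fin n).2 ω))
          = fun ω => x k ω j * x k ω l := by
        funext ω
        simp only [Function.comp_apply]
        rw [← hfx ω]
      rw [heq1, heq2] at hcomp
      have := IndepFun.integral_mul_eq_mul_integral hcomp
        ((hameas i j).mul (hameas i l)).aestronglyMeasurable
        ((hxmi k j).mul (hxmi k l)).aestronglyMeasurable
      simpa [Pi.mul_apply] using this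
    obtain ⟨C', hC'0, hC'⟩ := hbd (k+1)
    have hsqint : ∀ i, Integrable (fun ω => x (k+1) ω i ^ 2) μ := fun i =>
      integrable_of_bdd ((hxmi (k+1) i).pow_const 2) (C := C' ^ 2) fun ω => by
        rw [abs_pow]; exact pow_le_pow_left₀ (abs_nonneg _) (hC' ω i) 2
    have hpt : ∀ ω i, x (k+1) ω i ^ 2
        = ∑ j, ∑ l, (a i j ω * a i l ω) * (x k ω j * x k ω l) := by
      intro ω i
      rw [hxentry k ω i, sq, Finset.sum_mul_sum]
      exact Finset.sum_congr rfl fun j _ => Finset.sum_congr rfl fun l _ => by ring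
    have hsum1 : ∫ ω, ∑ i, x (k+1) ω i ^ 2 ∂μ = ∑ i, ∑ j, ∑ l,
        (∫ ω, a i j ω * a i l ω ∂μ) * ∫ ω, x k ω j * x k ω l ∂μ := by
      rw [integral_finset_sum _ (fun i _ => hsqint i)]
      refine Finset.sum_congr rfl fun i _ => ?_
      rw [integral_congr_ae (ae_of_all μ (fun ω => hpt ω i)),
        integral_finset_sum _ (fun j _ => integrable_finset_sum _ (fun l _ => haayyint i j l))]
      refine Finset.sum_congr rfl fun j _ => ?_
      rw [integral_finset_sum _ (fun l _ => haayyint i j l)]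
      exact Finset.sum_congr rfl fun l _ => hsplit i j l
    have hMentry : ∀ j l, ∑ i, (D i j * D i l
        + (if j = l then L i j * L i l * (1 / p j - 1) else 0)) = M j l := by
      intro j l
      rw [hMdef]
      by_cases hjl : j = l
      · subst hjl
        simp only [Matrix.add_apply, Matrix.mul_apply, Matrix.transpose_apply,
          Matrix.diagonal_apply_eq, eq_self_iff_true, if_true]
        rw [Finset.sum_add_distrib, ← Finset.sum_mul]
        congr 1
        have hrw : ∀ i : Fin n, L i j * L i j = L i j ^ 2 := fun i => (sq (L i j)).symm ▸ by ring
        rw [Finset.sum_congr rfl fun i _ => (pow_two (L i j)).symm]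
        have hpj := (hp0 j).ne'
        field_simp
        ring
      · simp only [Matrix.add_apply, Matrix.mul_apply, Matrix.transpose_apply,
          Matrix.diagonal_apply_ne _ hjl, if_neg hjl]
        simp
    have hsum2 : ∑ i, ∑ j, ∑ l, (∫ ω, a i j ω * a i l ω ∂μ) * (∫ ω, x k ω j * x k ω l ∂μ)
        = ∑ j, ∑ l, M j l * ∫ ω, x k ω j * x k ω l ∂μ := by
      rw [Finset.sum_comm]
      refine Finset.sum_congr rfl fun j _ => ?_
      rw [Finset.sum_comm]
      refine Finset.sum_congr rfl fun l _ => ?_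
      rw [← Finset.sum_mul, ← hMentry j l]
      congr 1
      exact Finset.sum_congr rfl fun i _ => by rw [hEaa i j l]
    have hsum3 : ∑ j, ∑ l, M j l * ∫ ω, x k ω j * x k ω l ∂μ
        = ∫ ω, ∑ j, ∑ l, M j l * (x k ω j * x k ω l) ∂μ := by
      rw [integral_finset_sum (f := fun j ω => ∑ l, M j l * (x k ω j * x k ω l)) _
        (fun j _ => integrable_finset_sum _
        (fun l _ => (hyyint j l).const_mul _))]
      refine Finset.sum_congr rfl fun j _ => ?_
      rw [integral_finset_sum _ (fun l _ => (hyyint j l).const_mul _)]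
      exact Finset.sum_congr rfl fun l _ => (integral_const_mul _ _).symm
    have hsqkint : Integrable (fun ω => ∑ i, x k ω i ^ 2) μ :=
      integrable_finset_sum _ fun i _ => integrable_of_bdd ((hxmi k i).pow_const 2) (C := C ^ 2)
        fun ω => by rw [abs_pow]; exact pow_le_pow_left₀ (abs_nonneg _) (hC ω i) 2
    calc ∫ ω, ∑ i, x (k+1) ω i ^ 2 ∂μ
        = ∫ ω, ∑ j, ∑ l, M j l * (x k ω j * x k ω l) ∂μ := by rw [hsum1, hsum2, hsum3]
      _ ≤ ∫ ω, specNorm M * ∑ i, x k ω i ^ 2 ∂μ := by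
          refine integral_mono (integrable_finset_sum _ fun j _ => integrable_finset_sum _
            fun l _ => (hyyint j l).const_mul _) (hsqkint.const_mul _) ?_
          intro ω
          exact quad_bound M (x k ω)
      _ = specNorm M * ∫ ω, ∑ i, x k ω i ^ 2 ∂μ := integral_const_mul _ _

  have hg0 : 0 ≤ g := norm_nonneg _
  have hmain : ∀ k, (∫ ω, ∑ i, (x k ω i) ^ 2 ∂μ) ≤ g ^ k * ∑ i, (x₀ i) ^ 2 := by
    intro k
    induction k with
    | zero => simp [hx0]
    | succ k ih =>
        calc (∫ ω, ∑ i, (x (k+1) ω i) ^ 2 ∂μ) ≤ g * ∫ ω, ∑ i, (x k ω i) ^ 2 ∂μ := hkey k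
          _ ≤ g * (g ^ k * ∑ i, (x₀ i) ^ 2) := mul_le_mul_of_nonneg_left ih hg0
          _ = g ^ (k+1) * ∑ i, (x₀ i) ^ 2 := by ring
  refine ⟨hmain, ?_⟩
  have hnn : ∀ k, 0 ≤ ∫ ω, ∑ i, (x k ω i) ^ 2 ∂μ := fun k =>
    integral_nonneg fun ω => Finset.sum_nonneg fun i _ => sq_nonneg _
  have hlim : Tendsto (fun k => g ^ k * ∑ i, (x₀ i) ^ 2) atTop (nhds 0) := by
    have := (tendsto_pow_atTop_nhds_zero_of_lt_one hg0 hg).mul_const (∑ i, (x₀ i) ^ 2)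
    simpa using this
  exact squeeze_zero hnn hmain hlim
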